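/- Let s ∈ ℂ with Re(s) > 1, let n ∈ ℕ, and let r ∈ ℂ be either real or purely imaginary with |r| ≤ 1/2. Then H(r, g_s) = [2^{−2n} (s)_{2n} / ((s/2 − 1/4 − ir/2)_n · (s/2 − 1/4 + ir/2)_n)] · H(r, g_{s+2n}), where H(r,g) := 2∫₀^∞ cos(ur) g(u) du, g_s(u) := 2^{1/2}√π (Γ(s−1/2)/Γ(s)) cosh(u)^{−(s−1/2)}, and (a)_n := a(a+1)⋯(a+n−1) denotes the Pochhammer symbol. -/

import Mathlib

open MeasureTheory Set

/-- `H(r,g) := 2 ∫₀^∞ cos(ur) g(u) du`. -/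
noncomputable def waveH (r : ℂ) (g : ℝ → ℂ) : ℂ :=
  2 * ∫ u in Set.Ioi (0 : ℝ), Complex.cos (u * r) * g u

/-- The test function `g_s(u) = 2^{1/2} √π (Γ(s-1/2)/Γ(s)) cosh(u)^{-(s-1/2)}`. -/
noncomputable def gTest (s : ℂ) (u : ℝ) : ℂ :=
  (2 : ℂ) ^ ((1 / 2 : ℂ)) * (Real.sqrt Real.pi : ℂ) *
    (Complex.Gamma (s - 1 / 2) / Complex.Gamma s) *
      ((Real.cosh u : ℂ) ^ (-(s - 1 / 2)))


open Filter Topology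


lemma hasDerivAt_coshC (u : ℝ) :
    HasDerivAt (fun u : ℝ => ((Real.cosh u : ℝ) : ℂ)) (Real.sinh u) u :=
  (Real.hasDerivAt_cosh u).ofReal_comp

lemma hasDerivAt_sinhC (u : ℝ) :
    HasDerivAt (fun u : ℝ => ((Real.sinh u : ℝ) : ℂ)) (Real.cosh u) u :=
  (Real.hasDerivAt_sinh u).ofReal_comp

lemma hasDerivAt_cosh_cpow (c : ℂ) (u : ℝ) :
    HasDerivAt (fun u : ℝ => ((Real.cosh u : ℂ)) ^ c)
      (c * (Real.cosh u : ℂ) ^ (c - 1) * (Real.sinh u : ℂ)) u := by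
  have h : HasDerivAt (fun z : ℂ => Complex.cosh z ^ c)
      (c * Complex.cosh u ^ (c - 1) * Complex.sinh u) (u : ℂ) := by
    have := HasDerivAt.cpow_const (c := c) (Complex.hasDerivAt_cosh (u:ℂ))
      (Or.inl (by simp [Complex.cosh_ofReal_re]; positivity))
    simpa [mul_assoc] using this
  have h2 := h.comp_ofReal
  simp only [← Complex.ofReal_cosh, ← Complex.ofReal_sinh] at h2
  simpa using h2

lemma hasDerivAt_mulr (r : ℂ) (u : ℝ) :
    HasDerivAt (fun u : ℝ => (u : ℂ) * r) r u := by
  simpa using ((hasDerivAt_id u).ofReal_comp).mul_const r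

lemma abs_cos_le' (z : ℂ) : ‖Complex.cos z‖ ≤ Real.exp |z.im| := by
  have h1 : (z * Complex.I).re = -z.im := by simp
  have h2 : (-z * Complex.I).re = z.im := by simp
  have e1 : Real.exp (-z.im) ≤ Real.exp |z.im| := Real.exp_le_exp.2 (neg_le_abs _)
  have e2 : Real.exp z.im ≤ Real.exp |z.im| := Real.exp_le_exp.2 (le_abs_self _)
  rw [Complex.cos]
  calc ‖(Complex.exp (z * Complex.I) + Complex.exp (-z * Complex.I)) / 2‖
      ≤ (‖Complex.exp (z * Complex.I)‖ + ‖Complex.exp (-z * Complex.I)‖) / 2 := by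
        rw [norm_div]
        simp only [Complex.norm_ofNat]
        gcongr
        exact norm_add_le _ _
    _ ≤ Real.exp |z.im| := by
        rw [Complex.norm_exp, Complex.norm_exp, h1, h2]
        linarith

lemma abs_sin_le' (z : ℂ) : ‖Complex.sin z‖ ≤ Real.exp |z.im| := by
  have h1 : (z * Complex.I).re = -z.im := by simp
  have h2 : (-z * Complex.I).re = z.im := by simp
  have e1 : Real.exp (-z.im) ≤ Real.exp |z.im| := Real.exp_le_exp.2 (neg_le_abs _)
  have e2 : Real.exp z.im ≤ Real.exp |z.im| := Real.exp_le_exp.2 (le_abs_self _)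
  rw [Complex.sin]
  calc ‖(Complex.exp (-z * Complex.I) - Complex.exp (z * Complex.I)) * Complex.I / 2‖
      ≤ (‖Complex.exp (-z * Complex.I)‖ + ‖Complex.exp (z * Complex.I)‖) / 2 := by
        rw [norm_div, norm_mul]
        simp only [Complex.norm_I, mul_one, Complex.norm_ofNat]
        gcongr
        exact norm_sub_le _ _
    _ ≤ Real.exp |z.im| := by
        rw [Complex.norm_exp, Complex.norm_exp, h1, h2]
        linarith

lemma norm_cosh_cpow (c : ℂ) (u : ℝ) :
    ‖((Real.cosh u : ℂ)) ^ c‖ = Real.cosh u ^ c.re := by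
  rw [Complex.norm_cpow_eq_rpow_re_of_pos (Real.cosh_pos u)]

lemma cosh_rpow_le (g : ℝ) (hg : 0 ≤ g) (u : ℝ) :
    Real.cosh u ^ (-g) ≤ 2 ^ g * Real.exp (-(g * u)) := by
  have h1 : Real.exp u / 2 ≤ Real.cosh u := by
    rw [Real.cosh_eq]
    have := Real.exp_pos (-u)
    linarith
  have h2 : (0:ℝ) < Real.exp u / 2 := by positivity
  calc Real.cosh u ^ (-g) ≤ (Real.exp u / 2) ^ (-g) :=
        Real.rpow_le_rpow_of_nonpos h2 h1 (by linarith)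
    _ = 2 ^ g * Real.exp (-(g * u)) := by
        rw [Real.div_rpow (Real.exp_pos u).le (by norm_num), ← Real.exp_mul,
          Real.rpow_neg (by norm_num : (0:ℝ) ≤ 2)]
        rw [div_eq_mul_inv, inv_inv, mul_comm]
        ring_nf


lemma continuous_cosh_cpow (c : ℂ) :
    Continuous (fun u : ℝ => ((Real.cosh u : ℂ)) ^ c) :=
  continuous_iff_continuousAt.2 fun u => (hasDerivAt_cosh_cpow c u).continuousAt

lemma norm_cos_mul_cosh_le {r γ : ℂ} {u : ℝ} (hu : 0 ≤ u) (hg : 0 ≤ γ.re) :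
    ‖Complex.cos (u * r) * (Real.cosh u : ℂ) ^ (-γ)‖ ≤
      2 ^ γ.re * Real.exp (-((γ.re - |r.im|) * u)) := by
  rw [norm_mul, norm_cosh_cpow]
  have h1 : ‖Complex.cos (↑u * r)‖ ≤ Real.exp (u * |r.im|) := by
    have := abs_cos_le' (↑u * r)
    have him : |(↑u * r).im| = u * |r.im| := by
      simp [Complex.mul_im, Complex.ofReal_re, Complex.ofReal_im, abs_mul, abs_of_nonneg hu]
    rwa [him] at this
  have h2 : Real.cosh u ^ (-γ).re ≤ 2 ^ γ.re * Real.exp (-(γ.re * u)) := by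
    rw [Complex.neg_re]
    exact cosh_rpow_le γ.re hg u
  calc ‖Complex.cos (↑u * r)‖ * Real.cosh u ^ (-γ).re
      ≤ Real.exp (u * |r.im|) * (2 ^ γ.re * Real.exp (-(γ.re * u))) := by
        apply mul_le_mul h1 h2 (Real.rpow_nonneg (Real.cosh_pos u).le _) (Real.exp_pos _).le
    _ = 2 ^ γ.re * Real.exp (-((γ.re - |r.im|) * u)) := by
        rw [← mul_assoc, mul_comm (Real.exp _), mul_assoc, ← Real.exp_add]
        ring_nf

lemma integrable_main (r γ : ℂ) (h : |r.im| < γ.re) :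
    IntegrableOn (fun u : ℝ => Complex.cos (u * r) * (Real.cosh u : ℂ) ^ (-γ)) (Ioi 0) := by
  have hg : 0 ≤ γ.re := le_trans (abs_nonneg _) h.le
  have hint : IntegrableOn (fun u : ℝ => 2 ^ γ.re * Real.exp (-((γ.re - |r.im|)) * u)) (Ioi 0) :=
    (exp_neg_integrableOn_Ioi 0 (by linarith)).const_mul _
  refine Integrable.mono' hint ?_ ?_
  · exact ((Complex.continuous_cos.comp (Complex.continuous_ofReal.mul continuous_const)).mul
      (continuous_cosh_cpow (-γ))).aestronglyMeasurable.restrict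
  · rw [ae_restrict_iff' measurableSet_Ioi]
    filter_upwards with u hu
    have := norm_cos_mul_cosh_le (r := r) (γ := γ) (le_of_lt hu) hg
    have e : -((γ.re - |r.im|) * u) = -(γ.re - |r.im|) * u := by ring
    rw [e] at this
    exact this


lemma phi_hasDerivAt (r β : ℂ) (u : ℝ) :
    HasDerivAt (fun u : ℝ =>
        β * (Complex.cos (u * r) * (Real.sinh u : ℂ) * (Real.cosh u : ℂ) ^ (-(β+1)))
          - r * (Complex.sin (u * r) * (Real.cosh u : ℂ) ^ (-β)))
      (β * (β+1) * (Complex.cos (u * r) * ((Real.cosh u : ℂ)) ^ (-(β+2)))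
        - (β^2 + r^2) * (Complex.cos (u * r) * ((Real.cosh u : ℂ)) ^ (-β))) u := by
  have hc : HasDerivAt (fun u : ℝ => Complex.cos (u * r)) (-Complex.sin (u * r) * r) u := by
    have : HasDerivAt (fun z : ℂ => Complex.cos (z * r)) (-Complex.sin (u * r) * r) (u:ℂ) := by
      simpa using ((hasDerivAt_id (u:ℂ)).mul_const r).ccos
    exact this.comp_ofReal
  have hs : HasDerivAt (fun u : ℝ => Complex.sin (u * r)) (Complex.cos (u * r) * r) u := by
    have : HasDerivAt (fun z : ℂ => Complex.sin (z * r)) (Complex.cos (u * r) * r) (u:ℂ) := by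
      simpa using ((hasDerivAt_id (u:ℂ)).mul_const r).csin
    exact this.comp_ofReal
  have h1 := (((hc.mul (hasDerivAt_sinhC u)).mul (hasDerivAt_cosh_cpow (-(β+1)) u)).const_mul β)
  have h2 := ((hs.mul (hasDerivAt_cosh_cpow (-β) u)).const_mul r)
  have H := h1.sub h2
  refine H.congr_deriv ?_
  simp only [Pi.mul_apply]
  set ch : ℂ := (Real.cosh u : ℂ) with hch
  set sh : ℂ := (Real.sinh u : ℂ) with hsh
  have hch0 : ch ≠ 0 := by
    simp only [hch, Ne, Complex.ofReal_eq_zero]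
    exact (Real.cosh_pos u).ne'
  have hstep : ∀ a : ℂ, ch ^ (a + 1) = ch ^ a * ch := fun a => by
    rw [Complex.cpow_add _ _ hch0, Complex.cpow_one]
  have hA : ch ^ (-(β+1)) = ch ^ (-(β+2)) * ch := by
    rw [show -(β+1) = -(β+2) + 1 by ring, hstep]
  have hB : ch ^ (-β) = ch ^ (-(β+2)) * ch * ch := by
    rw [show -β = (-(β+2) + 1) + 1 by ring, hstep, hstep]
  have hC : ch ^ (-(β+1) - 1) = ch ^ (-(β+2)) := by
    rw [show -(β+1) - 1 = -(β+2) by ring]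
  have hD : ch ^ (-β - 1) = ch ^ (-(β+2)) * ch := by
    rw [show -β - 1 = -(β+2) + 1 by ring, hstep]
  have hE : sh * sh = ch * ch - 1 := by
    rw [hsh, hch, Complex.ofReal_sinh, Complex.ofReal_cosh]
    have h := Complex.cosh_sq_sub_sinh_sq (u:ℂ)
    linear_combination -h
  rw [hA, hB, hC, hD]
  linear_combination (-(β * (β+1) * Complex.cos (↑u * r) * ch ^ (-(β+2)))) * hE


lemma phi_norm_le (r β : ℂ) (hg : 0 ≤ β.re) {u : ℝ} (hu : 0 ≤ u) :
    ‖β * (Complex.cos (u * r) * (Real.sinh u : ℂ) * (Real.cosh u : ℂ) ^ (-(β+1)))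
          - r * (Complex.sin (u * r) * (Real.cosh u : ℂ) ^ (-β))‖
      ≤ (‖β‖ + ‖r‖) * (2 ^ β.re * Real.exp (-((β.re - |r.im|) * u))) := by
  have him : |((u:ℂ) * r).im| = u * |r.im| := by
    simp [Complex.mul_im, Complex.ofReal_re, Complex.ofReal_im, abs_mul, abs_of_nonneg hu]
  have hM : Real.exp (u * |r.im|) * Real.cosh u ^ (-β.re)
      ≤ 2 ^ β.re * Real.exp (-((β.re - |r.im|) * u)) := by
    calc Real.exp (u * |r.im|) * Real.cosh u ^ (-β.re)
        ≤ Real.exp (u * |r.im|) * (2 ^ β.re * Real.exp (-(β.re * u))) := by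
          gcongr
          exact cosh_rpow_le β.re hg u
      _ = 2 ^ β.re * Real.exp (-((β.re - |r.im|) * u)) := by
          rw [← mul_assoc, mul_comm (Real.exp _), mul_assoc, ← Real.exp_add]
          ring_nf
  have h1 : ‖Complex.cos (u * r) * (Real.sinh u : ℂ) * (Real.cosh u : ℂ) ^ (-(β+1))‖
      ≤ Real.exp (u * |r.im|) * Real.cosh u ^ (-β.re) := by
    rw [norm_mul, norm_mul, norm_cosh_cpow, Complex.norm_real, Real.norm_eq_abs]
    have hsh : |Real.sinh u| ≤ Real.cosh u := by
      rw [Real.abs_sinh, ← Real.cosh_abs u]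
      exact (Real.sinh_lt_cosh _).le
    have hb : (-(β+1)).re = -β.re - 1 := by simp; ring
    rw [hb]
    calc ‖Complex.cos (↑u * r)‖ * |Real.sinh u| * Real.cosh u ^ (-β.re - 1)
        ≤ Real.exp (u * |r.im|) * Real.cosh u * Real.cosh u ^ (-β.re - 1) := by
          apply mul_le_mul_of_nonneg_right _ (Real.rpow_nonneg (Real.cosh_pos u).le _)
          exact mul_le_mul (him ▸ abs_cos_le' _) hsh (abs_nonneg _) (Real.exp_pos _).le
      _ = Real.exp (u * |r.im|) * Real.cosh u ^ (-β.re) := by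
          rw [mul_assoc]
          congr 1
          rw [mul_comm, ← Real.rpow_add_one (Real.cosh_pos u).ne']
          ring_nf
  have h2 : ‖Complex.sin (u * r) * (Real.cosh u : ℂ) ^ (-β)‖
      ≤ Real.exp (u * |r.im|) * Real.cosh u ^ (-β.re) := by
    rw [norm_mul, norm_cosh_cpow, Complex.neg_re]
    exact mul_le_mul (him ▸ abs_sin_le' _) le_rfl
      (Real.rpow_nonneg (Real.cosh_pos u).le _) (Real.exp_pos _).le
  calc ‖β * (Complex.cos (u * r) * (Real.sinh u : ℂ) * (Real.cosh u : ℂ) ^ (-(β+1)))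
          - r * (Complex.sin (u * r) * (Real.cosh u : ℂ) ^ (-β))‖
      ≤ ‖β‖ * ‖Complex.cos (u * r) * (Real.sinh u : ℂ) * (Real.cosh u : ℂ) ^ (-(β+1))‖
        + ‖r‖ * ‖Complex.sin (u * r) * (Real.cosh u : ℂ) ^ (-β)‖ := by
        refine (norm_sub_le _ _).trans ?_
        rw [show ‖β * (Complex.cos (u * r) * (Real.sinh u : ℂ) * (Real.cosh u : ℂ) ^ (-(β+1)))‖
            = ‖β‖ * ‖Complex.cos (u * r) * (Real.sinh u : ℂ) * (Real.cosh u : ℂ) ^ (-(β+1))‖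
          from norm_mul _ _,
          show ‖r * (Complex.sin (u * r) * (Real.cosh u : ℂ) ^ (-β))‖
            = ‖r‖ * ‖Complex.sin (u * r) * (Real.cosh u : ℂ) ^ (-β)‖ from norm_mul _ _]
    _ ≤ ‖β‖ * (Real.exp (u * |r.im|) * Real.cosh u ^ (-β.re))
        + ‖r‖ * (Real.exp (u * |r.im|) * Real.cosh u ^ (-β.re)) := by
        gcongr
    _ = (‖β‖ + ‖r‖) * (Real.exp (u * |r.im|) * Real.cosh u ^ (-β.re)) := by ring
    _ ≤ (‖β‖ + ‖r‖) * (2 ^ β.re * Real.exp (-((β.re - |r.im|) * u))) := by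
        have := hM
        gcongr

lemma key_identity (r β : ℂ) (hβ : |r.im| < β.re) :
    β * (β+1) * ∫ u in Ioi (0:ℝ), Complex.cos (u * r) * (Real.cosh u : ℂ) ^ (-(β+2))
      = (β^2 + r^2) * ∫ u in Ioi (0:ℝ), Complex.cos (u * r) * (Real.cosh u : ℂ) ^ (-β) := by
  have hg : 0 ≤ β.re := le_trans (abs_nonneg _) hβ.le
  have hβ2 : |r.im| < (β+2).re := by simp only [Complex.add_re]; norm_num; linarith
  have hint2 := (integrable_main r (β+2) hβ2).const_mul (β * (β+1))
  have hint0 := (integrable_main r β hβ).const_mul (β^2 + r^2)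
  have hintD : IntegrableOn (fun u : ℝ =>
      β * (β+1) * (Complex.cos (u * r) * ((Real.cosh u : ℂ)) ^ (-(β+2)))
        - (β^2 + r^2) * (Complex.cos (u * r) * ((Real.cosh u : ℂ)) ^ (-β))) (Ioi 0) :=
    hint2.sub hint0
  have htend : Tendsto (fun u : ℝ =>
      β * (Complex.cos (u * r) * (Real.sinh u : ℂ) * (Real.cosh u : ℂ) ^ (-(β+1)))
        - r * (Complex.sin (u * r) * (Real.cosh u : ℂ) ^ (-β))) atTop (𝓝 0) := by
    have hbnd : ∀ᶠ u : ℝ in atTop, ‖β * (Complex.cos (u * r) * (Real.sinh u : ℂ) *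
          (Real.cosh u : ℂ) ^ (-(β+1)))
        - r * (Complex.sin (u * r) * (Real.cosh u : ℂ) ^ (-β))‖
        ≤ (‖β‖ + ‖r‖) * (2 ^ β.re * Real.exp (-((β.re - |r.im|) * u))) := by
      filter_upwards [eventually_ge_atTop (0:ℝ)] with u hu
      exact phi_norm_le r β hg hu
    apply squeeze_zero_norm' hbnd
    · have h0 : Tendsto (fun u : ℝ => -((β.re - |r.im|) * u)) atTop atBot := by
        have h00 : Tendsto (fun u : ℝ => (|r.im| - β.re) * u) atTop atBot :=
          tendsto_id.const_mul_atTop_of_neg (by linarith)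
        exact h00.congr (fun u => by ring)
      have h1 : Tendsto (fun u : ℝ => Real.exp (-((β.re - |r.im|) * u))) atTop (𝓝 0) :=
        Real.tendsto_exp_atBot.comp h0
      have := ((h1.const_mul (2 ^ β.re)).const_mul (‖β‖ + ‖r‖))
      simpa using this
  have hFTC := integral_Ioi_of_hasDerivAt_of_tendsto
    ((phi_hasDerivAt r β 0).continuousAt.continuousWithinAt)
    (fun x _ => phi_hasDerivAt r β x) hintD htend
  simp only [Complex.ofReal_zero, zero_mul, Complex.sin_zero, Real.sinh_zero, mul_zero,
    zero_sub, sub_zero, neg_zero, zero_add, add_zero, neg_neg, sub_self] at hFTC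
  rw [integral_sub hint2 hint0, MeasureTheory.integral_const_mul, MeasureTheory.integral_const_mul] at hFTC
  linear_combination hFTC

lemma ne_zero_of_re_pos' {z : ℂ} (h : 0 < z.re) : z ≠ 0 := by
  intro h0; rw [h0] at h; simp at h

lemma waveH_gTest (r s : ℂ) :
    waveH r (gTest s) = 2 * ((2 : ℂ) ^ ((1 / 2 : ℂ)) * (Real.sqrt Real.pi : ℂ) *
      (Complex.Gamma (s - 1 / 2) / Complex.Gamma s)) *
        ∫ u in Ioi (0:ℝ), Complex.cos (u * r) * (Real.cosh u : ℂ) ^ (-(s - 1/2)) := by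
  rw [waveH]
  have : (fun u : ℝ => Complex.cos (u * r) * gTest s u)
      = fun u : ℝ => ((2 : ℂ) ^ ((1 / 2 : ℂ)) * (Real.sqrt Real.pi : ℂ) *
        (Complex.Gamma (s - 1 / 2) / Complex.Gamma s)) *
          (Complex.cos (u * r) * (Real.cosh u : ℂ) ^ (-(s - 1/2))) := by
    funext u; rw [gTest]; ring
  rw [this, MeasureTheory.integral_const_mul]
  ring

lemma step_lemma (r s : ℂ) (hs : 1 < s.re) (hri : |r.im| ≤ 1/2) :
    waveH r (gTest s)
      = (s * (s+1) / ((s - 1/2)^2 + r^2)) * waveH r (gTest (s+2)) := by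
  set β := s - 1/2 with hβdef
  have hβre : β.re = s.re - 1/2 := by simp [hβdef]
  have hβ : |r.im| < β.re := by rw [hβre]; linarith
  have hβ0 : β ≠ 0 := ne_zero_of_re_pos' (by rw [hβre]; linarith)
  have hβ1 : (β+1) ≠ 0 := ne_zero_of_re_pos' (by simp [hβre]; linarith)
  have hs0 : s ≠ 0 := ne_zero_of_re_pos' (by linarith)
  have hs1 : (s+1) ≠ 0 := ne_zero_of_re_pos' (by simp; linarith)
  have hGs : Complex.Gamma s ≠ 0 := Complex.Gamma_ne_zero_of_re_pos (by linarith)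
  have hGβ : Complex.Gamma β ≠ 0 := Complex.Gamma_ne_zero_of_re_pos (by rw [hβre]; linarith)
  have hd : β^2 + r^2 ≠ 0 := by
    have h1 : (β + Complex.I * r) ≠ 0 := ne_zero_of_re_pos' (by
      simp [hβre, Complex.add_re, Complex.mul_re, Complex.I_re, Complex.I_im]
      have := abs_le.mp hri
      linarith)
    have h2 : (β - Complex.I * r) ≠ 0 := ne_zero_of_re_pos' (by
      simp [hβre, Complex.sub_re, Complex.mul_re, Complex.I_re, Complex.I_im]
      have := abs_le.mp hri
      linarith)
    have : β^2 + r^2 = (β + Complex.I * r) * (β - Complex.I * r) := by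
      ring_nf
      rw [Complex.I_sq]
      ring
    rw [this]
    exact mul_ne_zero h1 h2
  -- Gamma recurrences
  have hG2 : Complex.Gamma (s + 2 - 1/2) = (β+1) * β * Complex.Gamma β := by
    have e1 : s + 2 - 1/2 = (β + 1) + 1 := by rw [hβdef]; ring
    rw [e1, Complex.Gamma_add_one _ hβ1, Complex.Gamma_add_one _ hβ0]
    ring
  have hGs2 : Complex.Gamma (s + 2) = (s+1) * s * Complex.Gamma s := by
    have e1 : s + 2 = (s + 1) + 1 := by ring
    rw [e1, Complex.Gamma_add_one _ hs1, Complex.Gamma_add_one _ hs0]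
    ring
  have hkey := key_identity r β hβ
  rw [waveH_gTest, waveH_gTest]
  have e2 : -(s + 2 - 1/2) = -(β + 2) := by rw [hβdef]; ring
  rw [e2, hG2, hGs2, ← hβdef]
  set J2 : ℂ := ∫ u in Ioi (0:ℝ), Complex.cos (u * r) * (Real.cosh u : ℂ) ^ (-(β+2)) with hJ2
  set J0 : ℂ := ∫ u in Ioi (0:ℝ), Complex.cos (u * r) * (Real.cosh u : ℂ) ^ (-β) with hJ0
  have h2half : ((2:ℂ) ^ ((1/2:ℂ))) ≠ 0 := by
    rw [Ne, Complex.cpow_eq_zero_iff]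
    simp
  have hpi : ((Real.sqrt Real.pi : ℝ) : ℂ) ≠ 0 := by
    simp only [Ne, Complex.ofReal_eq_zero]
    positivity
  field_simp
  linear_combination (-1 : ℂ) * hkey

lemma poch_eval_succ_left (n : ℕ) (x : ℂ) :
    (ascPochhammer ℂ (n+1)).eval x = x * (ascPochhammer ℂ n).eval (x+1) := by
  rw [ascPochhammer_succ_left, Polynomial.eval_mul, Polynomial.eval_X, Polynomial.eval_comp,
    Polynomial.eval_add, Polynomial.eval_X, Polynomial.eval_one]

lemma poch_ne_zero (n : ℕ) (x : ℂ) (h : 0 < x.re) : (ascPochhammer ℂ n).eval x ≠ 0 := by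
  induction n with
  | zero => simp
  | succ n ih =>
    rw [ascPochhammer_succ_eval]
    refine mul_ne_zero ih (ne_zero_of_re_pos' ?_)
    simp only [Complex.add_re, Complex.natCast_re]
    positivity

/-- the shift formula
`H(r,g_s) = 2^{-2n} (s)_{2n} / ((s/2-1/4-ir/2)_n (s/2-1/4+ir/2)_n) · H(r,g_{s+2n})`
for `Re(s) > 1`, `n ∈ ℕ`, and `r` real or purely imaginary with `|r| ≤ 1/2`. -/
theorem statement4 (s : ℂ) (hs : 1 < s.re) (n : ℕ) (r : ℂ)
    (hr : r.im = 0 ∨ (r.re = 0 ∧ ‖r‖ ≤ 1 / 2)) :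
    waveH r (gTest s)
      = (2 : ℂ) ^ (-(2 * n : ℂ)) * (ascPochhammer ℂ (2 * n)).eval s /
          ((ascPochhammer ℂ n).eval (s / 2 - 1 / 4 - Complex.I * r / 2) *
            (ascPochhammer ℂ n).eval (s / 2 - 1 / 4 + Complex.I * r / 2)) *
        waveH r (gTest (s + 2 * n)) := by

  have hri : |r.im| ≤ 1/2 := by
    rcases hr with h | ⟨h1, h2⟩
    · simp [h]
    · calc |r.im| ≤ ‖r‖ := Complex.abs_im_le_norm r
        _ ≤ 1/2 := h2
  induction n generalizing s with
  | zero => simp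
  | succ n ih =>
    set a : ℂ := s / 2 - 1 / 4 - Complex.I * r / 2 with ha_def
    set b : ℂ := s / 2 - 1 / 4 + Complex.I * r / 2 with hb_def
    have hrim := abs_le.mp hri
    have ha_re : 0 < a.re := by
      rw [ha_def]
      simp [Complex.div_re, Complex.sub_re, Complex.mul_re, Complex.I_re, Complex.I_im,
        Complex.normSq_apply]
      norm_num
      linarith
    have hb_re : 0 < b.re := by
      rw [hb_def]
      simp [Complex.div_re, Complex.add_re, Complex.sub_re, Complex.mul_re, Complex.I_re,
        Complex.I_im, Complex.normSq_apply]
      norm_num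
      linarith
    have ha0 : a ≠ 0 := ne_zero_of_re_pos' ha_re
    have hb0 : b ≠ 0 := ne_zero_of_re_pos' hb_re
    have h1 := step_lemma r s hs hri
    have h2 := ih (s+2) (by simp only [Complex.add_re]; norm_num; linarith)
    rw [h1, h2]
    have e3 : s + 2 + 2*(n:ℂ) = s + 2*((n+1 : ℕ):ℂ) := by push_cast; ring
    rw [e3]
    have hcpow : (2:ℂ) ^ (-(2 * ((n+1:ℕ)):ℂ)) = (2:ℂ) ^ (-(2 * (n:ℕ)):ℂ) * (1/4 : ℂ) := by
      have e4 : (-(2 * ((n+1:ℕ)):ℂ)) = (-(2 * (n:ℕ)):ℂ) + ((-2:ℤ):ℂ) := by push_cast; ring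
      rw [e4, Complex.cpow_add _ _ two_ne_zero, Complex.cpow_intCast]
      norm_num
    have hP : (ascPochhammer ℂ (2 * (n+1))).eval s
        = s * (s+1) * (ascPochhammer ℂ (2*n)).eval (s+2) := by
      rw [show 2 * (n+1) = (2*n+1)+1 by ring, poch_eval_succ_left, poch_eval_succ_left,
        show s+1+1 = s+2 by ring]
      ring
    have hPa : (ascPochhammer ℂ (n+1)).eval a
        = a * (ascPochhammer ℂ n).eval ((s+2)/2 - 1/4 - Complex.I * r / 2) := by
      rw [poch_eval_succ_left, show a + 1 = (s+2)/2 - 1/4 - Complex.I * r / 2 by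
        rw [ha_def]; ring]
    have hPb : (ascPochhammer ℂ (n+1)).eval b
        = b * (ascPochhammer ℂ n).eval ((s+2)/2 - 1/4 + Complex.I * r / 2) := by
      rw [poch_eval_succ_left, show b + 1 = (s+2)/2 - 1/4 + Complex.I * r / 2 by
        rw [hb_def]; ring]
    rw [hcpow, hP, hPa, hPb]
    have h4ab : (s - 1/2)^2 + r^2 = 4 * (a * b) := by
      rw [ha_def, hb_def]
      ring_nf
      rw [Complex.I_sq]
      ring
    rw [h4ab]
    have hPa' := poch_ne_zero n ((s+2)/2 - 1/4 - Complex.I * r / 2) (by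
      have : (s+2)/2 - 1/4 - Complex.I * r / 2 = a + 1 := by rw [ha_def]; ring
      rw [this]
      simp only [Complex.add_re, Complex.one_re]
      linarith)
    have hPb' := poch_ne_zero n ((s+2)/2 - 1/4 + Complex.I * r / 2) (by
      have : (s+2)/2 - 1/4 + Complex.I * r / 2 = b + 1 := by rw [hb_def]; ring
      rw [this]
      simp only [Complex.add_re, Complex.one_re]
      linarith)
    set W : ℂ := waveH r (gTest (s + 2*((n+1:ℕ):ℂ))) with hW
    set Q : ℂ := (ascPochhammer ℂ (2*n)).eval (s+2) with hQ
    set Pa : ℂ := (ascPochhammer ℂ n).eval ((s+2)/2 - 1/4 - Complex.I * r / 2) with hPaD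
    set Pb : ℂ := (ascPochhammer ℂ n).eval ((s+2)/2 - 1/4 + Complex.I * r / 2) with hPbD
    set E : ℂ := (2:ℂ) ^ (-(2 * (n:ℕ)):ℂ) with hE
    field_simp
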